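/- For a ¬-free nested program P (a program with no occurrences of classical negation ¬) and consistent sets of literals X ⊆ Y, the pair (X,Y) is an SE-model of P if and only if (X⁺, Y⁺) is an SE-model of P, where Z⁺ denotes the set of atoms in Z. -/
import Mathlib


open scoped Classical

inductive Lit where
  | pos : ℕ → Lit
  | neg : ℕ → Lit
deriving DecidableEq

inductive Fml where
  | bot : Fml
  | top : Fml
  | lit : Lit → Fml
  | not : Fml → Fml
  | conj : Fml → Fml → Fml
  | disj : Fml → Fml → Fml
deriving DecidableEq

structure Rule where
  head : Fml
  body : Fml
deriving DecidableEq

abbrev Prog := Set Rule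

/-- A set of literals is consistent if it contains no complementary pair. -/
def Consistent (X : Set Lit) : Prop :=
  ∀ a : ℕ, ¬ (Lit.pos a ∈ X ∧ Lit.neg a ∈ X)

def Sat (X : Set Lit) : Fml → Prop
  | Fml.bot => False
  | Fml.top => True
  | Fml.lit l => l ∈ X
  | Fml.not F => ¬ Sat X F
  | Fml.conj F G => Sat X F ∧ Sat X G
  | Fml.disj F G => Sat X F ∨ Sat X G

def SatRule (X : Set Lit) (r : Rule) : Prop := Sat X r.body → Sat X r.head

def SatProg (X : Set Lit) (P : Prog) : Prop := ∀ r ∈ P, SatRule X r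

/-- The reduct of a formula relative to X. -/
noncomputable def Reduct (X : Set Lit) : Fml → Fml
  | Fml.bot => Fml.bot
  | Fml.top => Fml.top
  | Fml.lit l => Fml.lit l
  | Fml.not F => if Sat X F then Fml.bot else Fml.top
  | Fml.conj F G => Fml.conj (Reduct X F) (Reduct X G)
  | Fml.disj F G => Fml.disj (Reduct X F) (Reduct X G)

noncomputable def ReductRule (X : Set Lit) (r : Rule) : Rule :=
  ⟨Reduct X r.head, Reduct X r.body⟩

noncomputable def ReductProg (X : Set Lit) (P : Prog) : Prog :=
  ReductRule X '' P

/-- Y is an answer set for P: Y is minimal among consistent sets satisfying the reduct of P w.r.t. Y. -/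
def AnswerSet (Y : Set Lit) (P : Prog) : Prop :=
  Consistent Y ∧ SatProg Y (ReductProg Y P) ∧
    ∀ Z : Set Lit, Consistent Z → SatProg Z (ReductProg Y P) → Z ⊆ Y → Z = Y

def SEModel (P : Prog) (X Y : Set Lit) : Prop :=
  Consistent X ∧ Consistent Y ∧ X ⊆ Y ∧ SatProg Y P ∧ SatProg X (ReductProg Y P)

def StrongEq (P Q : Prog) : Prop :=
  ∀ R : Prog, ∀ Y : Set Lit, AnswerSet Y (P ∪ R) ↔ AnswerSet Y (Q ∪ R)

def Fml.negFree : Fml → Prop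
  | Fml.bot => True
  | Fml.top => True
  | Fml.lit l => ∃ a, l = Lit.pos a
  | Fml.not F => F.negFree
  | Fml.conj F G => F.negFree ∧ G.negFree
  | Fml.disj F G => F.negFree ∧ G.negFree

def ProgNegFree (P : Prog) : Prop := ∀ r ∈ P, r.head.negFree ∧ r.body.negFree

/-- The set of atoms (positive literals) in a set of literals. -/
def PosLits (Z : Set Lit) : Set Lit := {l ∈ Z | ∃ a, l = Lit.pos a}

def AtomsOnly (Z : Set Lit) : Prop := ∀ l ∈ Z, ∃ a, l = Lit.pos a


lemma sat_posLits (F : Fml) (hF : F.negFree) (X : Set Lit) :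
    Sat (PosLits X) F ↔ Sat X F := by
  induction F with
  | bot => simp [Sat]
  | top => simp [Sat]
  | lit l =>
    obtain ⟨a, rfl⟩ := hF
    simp [Sat, PosLits]
  | not F ih => simp [Sat, ih hF]
  | conj F G ihF ihG => simp [Sat, ihF hF.1, ihG hF.2]
  | disj F G ihF ihG => simp [Sat, ihF hF.1, ihG hF.2]

lemma reduct_negFree (F : Fml) (hF : F.negFree) (Y : Set Lit) :
    (Reduct Y F).negFree := by
  induction F with
  | bot => exact hF
  | top => exact hF
  | lit l => exact hF
  | not F ih =>
    simp only [Reduct]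
    split <;> trivial
  | conj F G ihF ihG => exact ⟨ihF hF.1, ihG hF.2⟩
  | disj F G ihF ihG => exact ⟨ihF hF.1, ihG hF.2⟩

lemma reduct_posLits (F : Fml) (hF : F.negFree) (Y : Set Lit) :
    Reduct (PosLits Y) F = Reduct Y F := by
  induction F with
  | bot => rfl
  | top => rfl
  | lit l => rfl
  | not F ih => simp only [Reduct, sat_posLits F hF Y]
  | conj F G ihF ihG => simp only [Reduct, ihF hF.1, ihG hF.2]
  | disj F G ihF ihG => simp only [Reduct, ihF hF.1, ihG hF.2]

/-- For a ¬-free program P and consistent X ⊆ Y, (X,Y) is an SE-model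
of P iff (X⁺,Y⁺) is. -/
theorem stmt6 (P : Prog) (hP : ProgNegFree P) (X Y : Set Lit)
    (hX : Consistent X) (hY : Consistent Y) (hXY : X ⊆ Y) :
    SEModel P X Y ↔ SEModel P (PosLits X) (PosLits Y) := by
  have hCX : Consistent (PosLits X) := fun a h => hX a ⟨h.1.1, h.2.1⟩
  have hCY : Consistent (PosLits Y) := fun a h => hY a ⟨h.1.1, h.2.1⟩
  have hsub : PosLits X ⊆ PosLits Y := fun l hl => ⟨hXY hl.1, hl.2⟩
  constructor
  · rintro ⟨-, -, -, hSY, hSX⟩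
    refine ⟨hCX, hCY, hsub, ?_, ?_⟩
    · intro r hr hb
      exact (sat_posLits _ (hP r hr).1 Y).2
        (hSY r hr ((sat_posLits _ (hP r hr).2 Y).1 hb))
    · rintro r ⟨s, hs, rfl⟩ hb
      have hrX := hSX (ReductRule Y s) ⟨s, hs, rfl⟩
      simp only [ReductRule, SatRule] at *
      rw [reduct_posLits _ (hP s hs).2] at hb
      rw [reduct_posLits _ (hP s hs).1]
      rw [sat_posLits _ (reduct_negFree _ (hP s hs).1 Y) X]
      exact hrX ((sat_posLits _ (reduct_negFree _ (hP s hs).2 Y) X).1 hb)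
  · rintro ⟨-, -, -, hSY, hSX⟩
    refine ⟨hX, hY, hXY, ?_, ?_⟩
    · intro r hr hb
      exact (sat_posLits _ (hP r hr).1 Y).1
        (hSY r hr ((sat_posLits _ (hP r hr).2 Y).2 hb))
    · rintro r ⟨s, hs, rfl⟩ hb
      have hrX := hSX (ReductRule (PosLits Y) s) ⟨s, hs, rfl⟩
      simp only [ReductRule, SatRule] at *
      rw [reduct_posLits _ (hP s hs).1, reduct_posLits _ (hP s hs).2] at hrX
      rw [sat_posLits _ (reduct_negFree _ (hP s hs).2 Y) X] at hrX
      exact (sat_posLits _ (reduct_negFree _ (hP s hs).1 Y) X).1 (hrX hb)
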